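/- Let A ∈ ℚ^{m×n}, b ∈ ℚ^m, c ∈ ℚ^n, and let l, u ∈ ℚⁿ be lower and upper variable bounds. Let y ∈ ℚ^m with y ≥ 0 componentwise be arbitrary, and define the residual r = c − Aᵀy ∈ ℚⁿ. Then every x ∈ ℚⁿ with Ax ≥ b and l ≤ x ≤ u satisfies cᵀx ≥ bᵀy + ∑ᵢ min(rᵢ·lᵢ, rᵢ·uᵢ). -/
import Mathlib


open Matrix

/-- Validity of the bound-shift safe dual bounding method: for any nonnegative
(approximate) dual multiplier vector `y`, shifting with the residual
`r = c − Aᵀy` against finite variable bounds `l ≤ x ≤ u` yields the valid lower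
bound `bᵀy + ∑ᵢ min(rᵢlᵢ, rᵢuᵢ)` on `cᵀx` for every `x` with `Ax ≥ b` and
`l ≤ x ≤ u`. -/
theorem bound_shift_valid
    (m n : ℕ) (A : Matrix (Fin m) (Fin n) ℚ) (b : Fin m → ℚ) (c : Fin n → ℚ)
    (l u : Fin n → ℚ)
    (y : Fin m → ℚ) (hy : ∀ j, 0 ≤ y j)
    (r : Fin n → ℚ) (hr : r = c - Aᵀ *ᵥ y) :
    ∀ x : Fin n → ℚ, (∀ j, b j ≤ (A *ᵥ x) j) → (∀ i, l i ≤ x i) → (∀ i, x i ≤ u i) →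
      b ⬝ᵥ y + ∑ i, min (r i * l i) (r i * u i) ≤ c ⬝ᵥ x := by
  intro x hAx hl hu
  have hc : c ⬝ᵥ x = y ⬝ᵥ (A *ᵥ x) + r ⬝ᵥ x := by
    subst hr
    rw [Matrix.dotProduct_mulVec, ← vecMul_transpose]
    simp [dotProduct, Finset.sum_sub_distrib, sub_mul]
  rw [hc]
  have h1 : b ⬝ᵥ y ≤ y ⬝ᵥ (A *ᵥ x) := by
    exact Finset.sum_le_sum fun j _ => by rw [mul_comm]; exact mul_le_mul_of_nonneg_left (hAx j) (hy j)
  have h2 : ∑ i, min (r i * l i) (r i * u i) ≤ r ⬝ᵥ x := by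
    apply Finset.sum_le_sum
    intro i _
    rcases le_or_gt 0 (r i) with h | h
    · exact le_trans (min_le_left _ _) (mul_le_mul_of_nonneg_left (hl i) h)
    · exact le_trans (min_le_right _ _) (mul_le_mul_of_nonpos_left (hu i) h.le)
  linarith
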